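/- Let (K, Γ, k; v) be an extremal valued field. Then Γ is either divisible or a ℤ-group. -/

import Mathlib

/-- An ordered abelian group is *regular* if for each positive integer `n`, every open
interval containing at least `n` elements contains an `n`-divisible element. -/
def IsRegularGroup (Γ : Type*) [AddCommGroup Γ] [LinearOrder Γ] [IsOrderedAddMonoid Γ] : Prop :=
  ∀ n : ℕ, 0 < n → ∀ α β : Γ, (∃ s : Finset Γ, s.card = n ∧ ↑s ⊆ Set.Ioo α β) →
    ∃ δ : Γ, n • δ ∈ Set.Ioo α β

/-- A valued field is *extremal* if every multivariable polynomial attains a maximal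
value (in `Γ ∪ {∞}`) on tuples from the valuation ring. -/
def IsExtremal {K Γ : Type*} [Field K] [AddCommGroup Γ] [LinearOrder Γ] [IsOrderedAddMonoid Γ]
    (v : AddValuation K (WithTop Γ)) : Prop :=
  ∀ (n : ℕ) (F : MvPolynomial (Fin n) K), ∃ a : Fin n → K,
    (∀ i, 0 ≤ v (a i)) ∧ ∀ b : Fin n → K, (∀ i, 0 ≤ v (b i)) →
      v (MvPolynomial.eval b F) ≤ v (MvPolynomial.eval a F)

section GroupLemmas

variable {Γ : Type*} [AddCommGroup Γ] [LinearOrder Γ] [IsOrderedAddMonoid Γ]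

private lemma my_le_nsmul_self {s : Γ} (hs : 0 ≤ s) {n : ℕ} (hn : n ≠ 0) : s ≤ n • s := by
  calc s = 1 • s := (one_nsmul s).symm
    _ ≤ n • s := nsmul_le_nsmul_left hs (Nat.one_le_iff_ne_zero.mpr hn)

private lemma my_nsmul_neg (n : ℕ) (δ : Γ) : n • (-δ) = -(n • δ) := by
  rw [← zero_sub δ, nsmul_sub, smul_zero, zero_sub]

private lemma my_nsmul_lt_nsmul {x y : Γ} (h : x < y) {k : ℕ} (hk : k ≠ 0) :
    k • x < k • y := by
  have h1 : 0 < k • (y - x) := nsmul_pos (sub_pos.mpr h) hk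
  rw [nsmul_sub] at h1
  exact sub_pos.mp h1

private lemma dense_small
    (hd : ∀ ρ : Γ, 0 < ρ → ∃ h : Γ, 0 < h ∧ h < ρ) (m : ℕ) :
    ∀ ρ : Γ, 0 < ρ → ∃ h : Γ, 0 < h ∧ m • h ≤ ρ := by
  have half : ∀ ρ : Γ, 0 < ρ → ∃ h : Γ, 0 < h ∧ h + h ≤ ρ := by
    intro ρ hρ
    obtain ⟨h₀, h₀pos, h₀lt⟩ := hd ρ hρ
    rcases le_or_gt (h₀ + h₀) ρ with h | h
    · exact ⟨h₀, h₀pos, h⟩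
    · refine ⟨ρ - h₀, sub_pos.mpr h₀lt, ?_⟩
      have heq : (ρ - h₀) + (ρ - h₀) = ρ + (ρ - (h₀ + h₀)) := by abel
      rw [heq]
      calc ρ + (ρ - (h₀ + h₀)) ≤ ρ + 0 := add_le_add_right (sub_nonpos.mpr h.le) ρ
        _ = ρ := add_zero ρ
  have pow2 : ∀ j : ℕ, ∀ ρ : Γ, 0 < ρ → ∃ h : Γ, 0 < h ∧ (2 ^ j) • h ≤ ρ := by
    intro j
    induction j with
    | zero =>
      intro ρ hρ
      obtain ⟨h₀, h₀pos, h₀lt⟩ := hd ρ hρ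
      exact ⟨h₀, h₀pos, by simpa using h₀lt.le⟩
    | succ j ih =>
      intro ρ hρ
      obtain ⟨h₁, h₁pos, h₁le⟩ := ih ρ hρ
      obtain ⟨h₂, h₂pos, h₂le⟩ := half h₁ h₁pos
      refine ⟨h₂, h₂pos, ?_⟩
      have heq : (2 ^ (j + 1)) • h₂ = (2 ^ j) • (h₂ + h₂) := by
        rw [pow_succ, mul_comm, mul_nsmul, two_nsmul]
      rw [heq]
      calc (2 ^ j) • (h₂ + h₂) ≤ (2 ^ j) • h₁ := nsmul_le_nsmul_right h₂le _
        _ ≤ ρ := h₁le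
  intro ρ hρ
  obtain ⟨h, hpos, hle⟩ := pow2 m ρ hρ
  refine ⟨h, hpos, ?_⟩
  calc m • h ≤ (2 ^ m) • h := nsmul_le_nsmul_left hpos.le (Nat.lt_two_pow_self).le
    _ ≤ ρ := hle

private lemma div_of_dense
    (hd : ∀ ρ : Γ, 0 < ρ → ∃ h : Γ, 0 < h ∧ h < ρ)
    (hsmax : ∀ (n : ℕ), n ≠ 0 → ∀ γ : Γ, 0 < γ →
      ∃ s : Γ, (0 ≤ s ∧ n • s ≤ γ) ∧ ∀ s' : Γ, 0 ≤ s' → n • s' ≤ γ → s' ≤ s)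
    (γ : Γ) (n : ℕ) (hn : 0 < n) : ∃ δ : Γ, n • δ = γ := by
  have hpos : ∀ γ : Γ, 0 < γ → ∃ δ : Γ, n • δ = γ := by
    intro γ hγ
    obtain ⟨s, ⟨hs0, hsγ⟩, hmax⟩ := hsmax n hn.ne' γ hγ
    refine ⟨s, ?_⟩
    by_contra hne
    have hρ : 0 < γ - n • s :=
      lt_of_le_of_ne (sub_nonneg.mpr hsγ) (Ne.symm (sub_ne_zero.mpr (Ne.symm hne)))
    obtain ⟨h, hposh, hle⟩ := dense_small hd n (γ - n • s) hρ
    have hsum : n • (s + h) ≤ γ := by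
      rw [nsmul_add]
      calc n • s + n • h ≤ n • s + (γ - n • s) := add_le_add_right hle _
        _ = γ := by abel
    have := hmax (s + h) (add_nonneg hs0 hposh.le) hsum
    exact absurd this (lt_add_of_pos_right s hposh).not_ge
  rcases lt_trichotomy γ 0 with h | h | h
  · obtain ⟨δ, hδ⟩ := hpos (-γ) (neg_pos.mpr h)
    exact ⟨-δ, by rw [my_nsmul_neg, hδ, neg_neg]⟩
  · exact ⟨0, by rw [smul_zero, h]⟩
  · exact hpos γ h

private lemma finset_bound {u : Γ} (humin : ∀ δ : Γ, 0 < δ → u ≤ δ) :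
    ∀ (n : ℕ), 0 < n → ∀ (α β : Γ) (s : Finset Γ), s.card = n → ↑s ⊆ Set.Ioo α β →
      α + n • u < β := by
  intro n
  induction n with
  | zero => exact fun h => absurd h (lt_irrefl 0)
  | succ m ih =>
    intro _ α β s hcard hsub
    have hne : s.Nonempty := Finset.card_pos.mp (by rw [hcard]; exact Nat.succ_pos m)
    set M := s.max' hne with hMdef
    have hM : M ∈ s := s.max'_mem hne
    have hMio : M ∈ Set.Ioo α β := hsub hM
    have hMβ : M + u ≤ β := by
      have h1 := humin (β - M) (sub_pos.mpr hMio.2)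
      calc M + u ≤ M + (β - M) := add_le_add_right h1 M
        _ = β := by abel
    rcases Nat.eq_zero_or_pos m with hm | hm
    · subst hm
      have h1 : α + u ≤ M := by
        have h2 := humin (M - α) (sub_pos.mpr hMio.1)
        calc α + u ≤ α + (M - α) := add_le_add_right h2 α
          _ = M := by abel
      calc α + (0 + 1) • u = α + u := by rw [zero_add, one_nsmul]
        _ ≤ M := h1
        _ < β := hMio.2
    · set s' := s.erase M with hs'def
      have hcard' : s'.card = m := by
        rw [hs'def, Finset.card_erase_of_mem hM, hcard]
        omega
      have hsub' : ↑s' ⊆ Set.Ioo α M := by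
        intro x hx
        have hxs' : x ∈ s' := hx
        have hxs : x ∈ s := Finset.mem_of_mem_erase hxs'
        have hxne : x ≠ M := Finset.ne_of_mem_erase hxs'
        exact ⟨(hsub hxs).1, lt_of_le_of_ne (s.le_max' x hxs) hxne⟩
      have hIH := ih hm α M s' hcard' hsub'
      calc α + (m + 1) • u = (α + m • u) + u := by rw [succ_nsmul, add_assoc]
        _ < M + u := add_lt_add_left hIH u
        _ ≤ β := hMβ

private lemma div_rem {u : Γ} (hu : 0 < u)
    (hsmax : ∀ (n : ℕ), n ≠ 0 → ∀ γ : Γ, 0 < γ →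
      ∃ s : Γ, (0 ≤ s ∧ n • s ≤ γ) ∧ ∀ s' : Γ, 0 ≤ s' → n • s' ≤ γ → s' ≤ s)
    (n : ℕ) (hn : 0 < n) (γ : Γ) :
    ∃ δ : Γ, n • δ ≤ γ ∧ γ < n • δ + n • u := by
  set l : Γ := |γ| + u with hldef
  have hl : 0 < l := add_pos_of_nonneg_of_pos (abs_nonneg γ) hu
  have hγ' : 0 < γ + n • l := by
    have h1 : l ≤ n • l := my_le_nsmul_self hl.le hn.ne'
    have h3 : 0 ≤ γ + |γ| := by
      have h4 := add_le_add_right (neg_le_abs γ) γ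
      rwa [add_neg_cancel] at h4
    have h2 : 0 < γ + l := by
      calc (0 : Γ) ≤ γ + |γ| := h3
        _ < γ + |γ| + u := lt_add_of_pos_right _ hu
        _ = γ + l := by rw [hldef, add_assoc]
    calc (0 : Γ) < γ + l := h2
      _ ≤ γ + n • l := add_le_add_right h1 γ
  obtain ⟨s, ⟨hs0, hsle⟩, hmax⟩ := hsmax n hn.ne' (γ + n • l) hγ'
  refine ⟨s - l, ?_, ?_⟩
  · rw [nsmul_sub]
    exact sub_le_iff_le_add.mpr hsle
  · by_contra hcon
    push_neg at hcon
    have hsum : n • (s + u) ≤ γ + n • l := by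
      rw [nsmul_sub] at hcon
      rw [nsmul_add]
      calc n • s + n • u = (n • s - n • l + n • u) + n • l := by abel
        _ ≤ γ + n • l := add_le_add_left hcon _
    have := hmax (s + u) (add_nonneg hs0 hu.le) hsum
    exact absurd this (lt_add_of_pos_right s hu).not_ge

end GroupLemmas

open MvPolynomial in
private lemma exists_smax {K Γ : Type*} [Field K] [AddCommGroup Γ] [LinearOrder Γ] [IsOrderedAddMonoid Γ]
    (v : AddValuation K (WithTop Γ))
    (hsurj : ∀ γ : Γ, ∃ x : K, v x = (γ : WithTop Γ))
    (hext : IsExtremal v)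
    {k : ℕ} (hk : k ≠ 0) {ε : Γ} (hε : 0 < ε) (hεk : ∀ δ : Γ, k • δ ≠ ε)
    {n : ℕ} (hn : n ≠ 0) {γ : Γ} (hγ : 0 < γ) :
    ∃ s : Γ, (0 ≤ s ∧ n • s ≤ γ) ∧ ∀ s' : Γ, 0 ≤ s' → n • s' ≤ γ → s' ≤ s := by
  by_contra hno
  push_neg at hno
  -- hno : ∀ s, 0 ≤ s ∧ n • s ≤ γ → ∃ s', (0 ≤ s' ∧ n • s' ≤ γ) ∧ s < s'
  obtain ⟨c, hc⟩ := hsurj γ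
  obtain ⟨c', hc'⟩ := hsurj (γ + γ + γ)
  obtain ⟨e, he⟩ := hsurj ε
  have hc0 : c ≠ 0 := by
    intro h; rw [h, v.map_zero] at hc; exact WithTop.top_ne_coe hc
  -- the witness polynomial
  set F : MvPolynomial (Fin 2) K :=
    (X 0 ^ n * X 1 - C c) ^ k - C e * (X 0 ^ (n + 1) * X 1 - C c') ^ k with hF
  have heval : ∀ b : Fin 2 → K,
      eval b F = (b 0 ^ n * b 1 - c) ^ k - e * (b 0 ^ (n + 1) * b 1 - c') ^ k := by
    intro b; simp [hF]
  obtain ⟨a, ha0, hamax⟩ := hext 2 F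
  -- the chain lower bound
  have hchain : ∀ s : Γ, 0 ≤ s → n • s ≤ γ →
      (↑(ε + k • (s + γ)) : WithTop Γ) ≤ v (eval a F) := by
    intro s hs hsγ
    obtain ⟨as, has⟩ := hsurj s
    have has0 : as ≠ 0 := by
      intro h; rw [h, v.map_zero] at has; exact WithTop.top_ne_coe has
    have haspow : as ^ n ≠ 0 := pow_ne_zero _ has0
    set bs : K := c / as ^ n with hbs
    have hprod : as ^ n * bs = c := by
      rw [hbs]; field_simp
    have hsle : s ≤ γ := by
      calc s ≤ n • s := by
              calc s = 1 • s := (one_nsmul s).symm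
                _ ≤ n • s := nsmul_le_nsmul_left hs (Nat.one_le_iff_ne_zero.mpr hn)
        _ ≤ γ := hsγ
    have hlt3 : ((s + γ : Γ) : WithTop Γ) < ((γ + γ + γ : Γ) : WithTop Γ) := by
      rw [WithTop.coe_lt_coe]
      calc s + γ ≤ γ + γ := add_le_add_left hsle γ
        _ < γ + γ + γ := lt_add_of_pos_right _ hγ
    have hvac : v (as * c) = ((s + γ : Γ) : WithTop Γ) := by
      rw [v.map_mul, has, hc, ← WithTop.coe_add]
    have hvQ : v (as * c - c') = ((s + γ : Γ) : WithTop Γ) := by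
      rw [v.map_sub_eq_of_lt_left (by rw [hvac, hc']; exact hlt3)]
      exact hvac
    -- value of bs
    have hbs0 : bs ≠ 0 := by rw [hbs]; exact div_ne_zero hc0 haspow
    obtain ⟨τ, hτ⟩ := WithTop.ne_top_iff_exists.mp (v.ne_top_iff.mpr hbs0)
    have hτval : n • s + τ = γ := by
      have h1 : v (as ^ n * bs) = (γ : WithTop Γ) := by rw [hprod, hc]
      rw [v.map_mul, v.map_pow, has, ← hτ, ← WithTop.coe_nsmul, ← WithTop.coe_add,
        WithTop.coe_inj] at h1
      exact h1
    have hτ0 : 0 ≤ τ := by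
      have : τ = γ - n • s := by rw [← hτval]; abel
      rw [this]
      exact sub_nonneg.mpr hsγ
    -- evaluation at the chain point
    have hevalb : eval ![as, bs] F = -(e * (as * c - c') ^ k) := by
      rw [heval]
      have h0 : (![as, bs] : Fin 2 → K) 0 = as := rfl
      have h1 : (![as, bs] : Fin 2 → K) 1 = bs := rfl
      rw [h0, h1]
      have h2 : as ^ (n + 1) * bs = as * c := by
        calc as ^ (n + 1) * bs = as * (as ^ n * bs) := by ring
          _ = as * c := by rw [hprod]
      rw [h2, hprod, sub_self, zero_pow hk, zero_sub]
    have hvb : v (eval ![as, bs] F) = ((ε + k • (s + γ) : Γ) : WithTop Γ) := by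
      rw [hevalb, v.map_neg, v.map_mul, he, v.map_pow, hvQ, ← WithTop.coe_nsmul,
        ← WithTop.coe_add]
    have hvalid : ∀ i, 0 ≤ v ((![as, bs] : Fin 2 → K) i) := by
      intro i
      fin_cases i
      · show (0 : WithTop Γ) ≤ v as
        rw [has, ← WithTop.coe_zero, WithTop.coe_le_coe]
        exact hs
      · show (0 : WithTop Γ) ≤ v bs
        rw [← hτ, ← WithTop.coe_zero, WithTop.coe_le_coe]
        exact hτ0
    calc ((ε + k • (s + γ) : Γ) : WithTop Γ) = v (eval ![as, bs] F) := hvb.symm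
      _ ≤ v (eval a F) := hamax _ hvalid
  -- the main dichotomy
  set P : K := a 0 ^ n * a 1 - c with hP
  set Q : K := a 0 ^ (n + 1) * a 1 - c' with hQ
  have hFa : eval a F = P ^ k - e * Q ^ k := heval a
  rcases le_or_gt (v P) ((γ : Γ) : WithTop Γ) with hA | hB
  · -- case A : v P ≤ γ, get contradiction with chain at s = 0
    obtain ⟨w, hw⟩ := WithTop.ne_top_iff_exists.mp (ne_top_of_le_ne_top WithTop.coe_ne_top hA)
    have hμle : v (eval a F) ≤ ((k • w : Γ) : WithTop Γ) := by
      rw [hFa]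
      have hvPk : v (P ^ k) = ((k • w : Γ) : WithTop Γ) := by
        rw [v.map_pow, ← hw, ← WithTop.coe_nsmul]
      rcases eq_or_ne (v Q) ⊤ with hQtop | hQfin
      · have hQ0 : Q = 0 := v.top_iff.mp hQtop
        rw [hQ0, zero_pow hk, mul_zero, sub_zero, hvPk]
      · obtain ⟨w', hw'⟩ := WithTop.ne_top_iff_exists.mp hQfin
        have hveQ : v (e * Q ^ k) = ((ε + k • w' : Γ) : WithTop Γ) := by
          rw [v.map_mul, he, v.map_pow, ← hw', ← WithTop.coe_nsmul, ← WithTop.coe_add]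
        have hne : v (P ^ k) ≠ v (e * Q ^ k) := by
          rw [hvPk, hveQ, Ne, WithTop.coe_inj]
          intro hbad
          exact hεk (w - w') (by rw [nsmul_sub, hbad]; abel)
        rcases hne.lt_or_gt with h | h
        · rw [v.map_sub_eq_of_lt_left h, hvPk]
        · rw [v.map_sub_eq_of_lt_right h, hveQ]
          rw [hvPk] at h
          rw [hveQ] at h
          exact h.le
    have h1 := hchain 0 le_rfl (by rw [smul_zero]; exact hγ.le)
    have h2 : ((k • w : Γ) : WithTop Γ) ≤ ((k • γ : Γ) : WithTop Γ) := by
      rw [WithTop.coe_le_coe]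
      exact nsmul_le_nsmul_right (by rw [← WithTop.coe_le_coe, hw]; exact hA) k
    have h3 : ε + k • ((0 : Γ) + γ) ≤ k • γ := by
      rw [← WithTop.coe_le_coe]
      exact le_trans h1 (le_trans hμle h2)
    rw [zero_add] at h3
    exact absurd h3 (lt_add_of_pos_left (k • γ) hε).not_ge
  · -- case B : γ < v P
    have hX : v (a 0 ^ n * a 1) = ((γ : Γ) : WithTop Γ) := by
      have hXeq : a 0 ^ n * a 1 = P + c := by rw [hP]; ring
      rw [hXeq, v.map_add_eq_of_lt_right (by rw [hc]; exact hB)]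
      exact hc
    have ha00 : a 0 ≠ 0 := by
      intro h
      rw [h, zero_pow hn, zero_mul, v.map_zero] at hX
      exact WithTop.top_ne_coe hX
    have ha10 : a 1 ≠ 0 := by
      intro h
      rw [h, mul_zero, v.map_zero] at hX
      exact WithTop.top_ne_coe hX
    obtain ⟨s, hs⟩ := WithTop.ne_top_iff_exists.mp (v.ne_top_iff.mpr ha00)
    obtain ⟨t, ht⟩ := WithTop.ne_top_iff_exists.mp (v.ne_top_iff.mpr ha10)
    have hst : n • s + t = γ := by
      rw [v.map_mul, v.map_pow, ← hs, ← ht, ← WithTop.coe_nsmul, ← WithTop.coe_add,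
        WithTop.coe_inj] at hX
      exact hX
    have hs0 : 0 ≤ s := by
      have := ha0 0
      rw [← hs, ← WithTop.coe_zero, WithTop.coe_le_coe] at this
      exact this
    have ht0 : 0 ≤ t := by
      have := ha0 1
      rw [← ht, ← WithTop.coe_zero, WithTop.coe_le_coe] at this
      exact this
    have hsS : n • s ≤ γ := by
      rw [← hst]; exact le_add_of_nonneg_right ht0
    have hsle : s ≤ γ := by
      calc s ≤ n • s := by
              calc s = 1 • s := (one_nsmul s).symm
                _ ≤ n • s := nsmul_le_nsmul_left hs0 (Nat.one_le_iff_ne_zero.mpr hn)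
        _ ≤ γ := hsS
    -- compute v Q
    have hQsplit : Q = (a 0 * c - c') + a 0 * P := by rw [hQ, hP]; ring
    have hvac : v (a 0 * c) = ((s + γ : Γ) : WithTop Γ) := by
      rw [v.map_mul, ← hs, hc, ← WithTop.coe_add]
    have hv1 : v (a 0 * c - c') = ((s + γ : Γ) : WithTop Γ) := by
      rw [v.map_sub_eq_of_lt_left (by
        rw [hvac, hc', WithTop.coe_lt_coe]
        calc s + γ ≤ γ + γ := add_le_add_left hsle γ
          _ < γ + γ + γ := lt_add_of_pos_right _ hγ)]
      exact hvac
    have hv1lt : v (a 0 * c - c') < v (a 0 * P) := by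
      rw [hv1, v.map_mul, ← hs, WithTop.coe_add]
      exact WithTop.add_lt_add_left WithTop.coe_ne_top hB
    have hvQ : v Q = ((s + γ : Γ) : WithTop Γ) := by
      rw [hQsplit, v.map_add_eq_of_lt_left hv1lt]
      exact hv1
    have hveQ : v (e * Q ^ k) = ((ε + k • (s + γ) : Γ) : WithTop Γ) := by
      rw [v.map_mul, he, v.map_pow, hvQ, ← WithTop.coe_nsmul, ← WithTop.coe_add]
    -- upper bound for the maximum
    have hμle : v (eval a F) ≤ ((ε + k • (s + γ) : Γ) : WithTop Γ) := by
      rw [hFa]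
      rcases eq_or_ne (v P) ⊤ with hPtop | hPfin
      · have hP0 : P = 0 := v.top_iff.mp hPtop
        rw [hP0, zero_pow hk, zero_sub, v.map_neg, hveQ]
      · obtain ⟨w, hw⟩ := WithTop.ne_top_iff_exists.mp hPfin
        have hvPk : v (P ^ k) = ((k • w : Γ) : WithTop Γ) := by
          rw [v.map_pow, ← hw, ← WithTop.coe_nsmul]
        have hne : v (P ^ k) ≠ v (e * Q ^ k) := by
          rw [hvPk, hveQ, Ne, WithTop.coe_inj]
          intro hbad
          exact hεk (w - (s + γ)) (by rw [nsmul_sub, hbad]; abel)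
        rcases hne.lt_or_gt with h | h
        · rw [v.map_sub_eq_of_lt_left h, ← hveQ]
          exact h.le
        · rw [v.map_sub_eq_of_lt_right h, hveQ]
    -- contradiction with the chain at a bigger s'
    obtain ⟨s', hs'0, hs'γ, hlt⟩ := hno s ⟨hs0, hsS⟩
    have h1 := hchain s' hs'0 hs'γ
    have h3 : ε + k • (s' + γ) ≤ ε + k • (s + γ) := by
      rw [← WithTop.coe_le_coe]
      exact le_trans h1 hμle
    have h4 : k • (s + γ) < k • (s' + γ) := by
      have h5 : 0 < k • ((s' + γ) - (s + γ)) :=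
        nsmul_pos (sub_pos.mpr (add_lt_add_left hlt γ)) hk
      rw [nsmul_sub] at h5
      exact sub_pos.mp h5
    exact absurd h3 (add_lt_add_right h4 ε).not_ge


/-- The value group of an extremal valued field is divisible or a ℤ-group
(a regular ordered group with a smallest positive element). -/
theorem value_group_of_extremal {K Γ : Type*} [Field K]
    [AddCommGroup Γ] [LinearOrder Γ] [IsOrderedAddMonoid Γ] (v : AddValuation K (WithTop Γ))
    (hsurj : ∀ γ : Γ, ∃ x : K, v x = (γ : WithTop Γ))
    (hext : IsExtremal v) :
    (∀ (γ : Γ) (n : ℕ), 0 < n → ∃ δ : Γ, n • δ = γ) ∨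
      (IsRegularGroup Γ ∧ ∃ γ : Γ, 0 < γ ∧ ∀ δ : Γ, 0 < δ → γ ≤ δ) := by
  by_cases hdiv : ∀ (γ : Γ) (n : ℕ), 0 < n → ∃ δ : Γ, n • δ = γ
  · exact Or.inl hdiv
  · push_neg at hdiv
    obtain ⟨γ₀, n₀, hn₀, hγ₀⟩ := hdiv
    have hγ₀0 : γ₀ ≠ 0 := by
      intro h
      exact hγ₀ 0 (by rw [smul_zero, h])
    obtain ⟨ε, hε, hεk⟩ : ∃ ε : Γ, 0 < ε ∧ ∀ δ : Γ, n₀ • δ ≠ ε := by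
      rcases hγ₀0.lt_or_gt with h | h
      · refine ⟨-γ₀, neg_pos.mpr h, fun δ hδ => hγ₀ (-δ) ?_⟩
        rw [my_nsmul_neg, hδ, neg_neg]
      · exact ⟨γ₀, h, hγ₀⟩
    have hsmax : ∀ (n : ℕ), n ≠ 0 → ∀ γ : Γ, 0 < γ →
        ∃ s : Γ, (0 ≤ s ∧ n • s ≤ γ) ∧ ∀ s' : Γ, 0 ≤ s' → n • s' ≤ γ → s' ≤ s := by
      intro n hn γ hγ
      exact exists_smax v hsurj hext hn₀.ne' hε hεk hn hγ
    by_cases hmin : ∃ u : Γ, 0 < u ∧ ∀ δ : Γ, 0 < δ → u ≤ δ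
    · obtain ⟨u, hu, humin⟩ := hmin
      refine Or.inr ⟨?_, u, hu, humin⟩
      intro n hn α β hfin
      obtain ⟨s, hcard, hsub⟩ := hfin
      have hb : α + n • u < β := finset_bound humin n hn α β s hcard hsub
      obtain ⟨δ, h1, h2⟩ := div_rem hu hsmax n hn (α + n • u)
      refine ⟨δ, ?_, lt_of_le_of_lt h1 hb⟩
      exact lt_of_add_lt_add_right h2
    · exfalso
      push_neg at hmin
      have hd : ∀ ρ : Γ, 0 < ρ → ∃ h : Γ, 0 < h ∧ h < ρ := hmin
      obtain ⟨δ, hδ⟩ := div_of_dense hd hsmax γ₀ n₀ hn₀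
      exact hγ₀ δ hδ
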